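/- Let ξ be an integer-valued random variable with E[ξ] = 1 and E[ξ²] < ∞, and let S_n be the sum of n i.i.d. copies of ξ. Then there exists a constant C such that for all n ≥ 1 and all integers m, P(S_n = n − m) ≤ C·n^{1/2}·m⁻². -/

import Mathlib

set_option maxHeartbeats 2000000
set_option linter.unusedSectionVars false
set_option linter.unusedVariables false
set_option linter.unusedTactic false

open MeasureTheory ProbabilityTheory Filter Topology ENNReal

section AuxLemmas
open Complex


lemma int_char (r : ℤ) : ∫ t in (-Real.pi)..Real.pi, Complex.exp ((t * r : ℝ) * Complex.I)
    = if r = 0 then (2 * Real.pi : ℂ) else 0 := by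
  by_cases hr : r = 0
  · simp [hr, two_mul]
  · have hre : ∀ t : ℝ, ((t * r : ℝ) : ℂ) * Complex.I = ((r : ℂ) * Complex.I) * (t : ℝ) := by
      intro t; push_cast; ring
    simp_rw [hre]
    rw [integral_exp_mul_complex (by simp [hr, Complex.ext_iff])]
    have h1 : (r : ℂ) * Complex.I * (Real.pi : ℂ) = r * (Real.pi * Complex.I) := by ring
    have h2 : (r : ℂ) * Complex.I * ((-Real.pi : ℝ) : ℂ) = (-r) * (Real.pi * Complex.I) := by
      push_cast; ring
    have h3 : ((-r : ℤ) : ℂ) = -(r : ℂ) := by push_cast; ring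
    rw [h1, h2, ← h3, Complex.exp_int_mul, Complex.exp_int_mul, Complex.exp_pi_mul_I]
    rw [if_neg hr, zpow_neg, ← inv_zpow, inv_neg, inv_one, sub_self, zero_div]


variable {Ω : Type} [MeasureSpace Ω] [IsProbabilityMeasure (ℙ : Measure Ω)]

/-- expectation of a product of functions of independent ℕ-valued r.v.s factorizes -/
lemma indep_integral_mul {A B : Ω → ℕ} (hA : Measurable A) (hB : Measurable B)
    (h : IndepFun A B ℙ) (f g : ℕ → ℂ) :
    ∫ ω, f (A ω) * g (B ω) ∂ℙ = (∫ ω, f (A ω) ∂ℙ) * ∫ ω, g (B ω) ∂ℙ := by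
  have hmap : (ℙ : Measure Ω).map (fun ω => (A ω, B ω)) = ((ℙ : Measure Ω).map A).prod ((ℙ : Measure Ω).map B) :=
    (indepFun_iff_map_prod_eq_prod_map_map hA.aemeasurable hB.aemeasurable).mp h
  have hf : Measurable f := measurable_from_top
  have hg : Measurable g := measurable_from_top
  have h1 : ∫ ω, f (A ω) * g (B ω) ∂ℙ
      = ∫ p : ℕ × ℕ, f p.1 * g p.2 ∂((ℙ : Measure Ω).map (fun ω => (A ω, B ω))) :=
    (integral_map (hA.aemeasurable.prodMk hB.aemeasurable)
      (((hf.comp measurable_fst).mul (hg.comp measurable_snd)).aestronglyMeasurable)).symm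
  rw [h1, hmap, integral_prod_mul,
    integral_map hA.aemeasurable hf.aestronglyMeasurable,
    integral_map hB.aemeasurable hg.aestronglyMeasurable]

section Char
variable (X : ℕ → Ω → ℕ) (hXmeas : ∀ i, Measurable (X i))
  (hindep : iIndepFun X ℙ)
  (hident : ∀ i, IdentDistrib (X i) (X 0) ℙ ℙ)

/-- the characteristic function of the common law -/
noncomputable def cf (t : ℝ) : ℂ := ∫ ω, Complex.exp ((t * (X 0 ω) : ℝ) * Complex.I) ∂ℙ

include hident in
lemma integral_char_eq (i : ℕ) (t : ℝ) :
    ∫ ω, Complex.exp ((t * (X i ω) : ℝ) * Complex.I) ∂ℙ = cf X t := by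
  exact ((hident i).comp (measurable_from_top
    (f := fun n : ℕ => Complex.exp ((t * n : ℝ) * Complex.I)))).integral_eq

include hXmeas hindep hident in
lemma char_sum (s : Finset ℕ) (t : ℝ) :
    ∫ ω, Complex.exp ((t * (∑ i ∈ s, X i ω) : ℝ) * Complex.I) ∂ℙ = cf X t ^ s.card := by
  classical
  induction s using Finset.induction_on with
  | empty => simp
  | @insert a s ha ih =>
    have hsum : Measurable (fun ω => ∑ i ∈ s, X i ω) := by
      exact Finset.measurable_sum s (fun i _ => hXmeas i)
    have hind : IndepFun (X a) (fun ω => ∑ i ∈ s, X i ω) ℙ := by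
      have h0 := (hindep.indepFun_finsetSum_of_notMem hXmeas ha).symm
      have : (∑ j ∈ s, X j) = fun ω => ∑ i ∈ s, X i ω := by
        funext ω; simp [Finset.sum_apply]
      rwa [this] at h0
    have key := indep_integral_mul (hXmeas a) hsum hind
      (fun n : ℕ => Complex.exp ((t * n : ℝ) * Complex.I))
      (fun n : ℕ => Complex.exp ((t * n : ℝ) * Complex.I))
    have : ∀ ω, Complex.exp ((t * (∑ i ∈ insert a s, X i ω) : ℝ) * Complex.I)
        = Complex.exp ((t * X a ω : ℝ) * Complex.I)
          * Complex.exp ((t * (∑ i ∈ s, X i ω) : ℝ) * Complex.I) := by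
      intro ω
      rw [Finset.sum_insert ha, ← Complex.exp_add]
      congr 1
      push_cast
      ring
    calc ∫ ω, Complex.exp ((t * (∑ i ∈ insert a s, X i ω) : ℝ) * Complex.I) ∂ℙ
        = ∫ ω, Complex.exp ((t * X a ω : ℝ) * Complex.I)
            * Complex.exp ((t * (∑ i ∈ s, X i ω) : ℝ) * Complex.I) ∂ℙ := by
          simp_rw [this]
      _ = (∫ ω, Complex.exp ((t * X a ω : ℝ) * Complex.I) ∂ℙ)
            * ∫ ω, Complex.exp ((t * (∑ i ∈ s, X i ω) : ℝ) * Complex.I) ∂ℙ := key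
      _ = cf X t ^ (insert a s).card := by
          rw [integral_char_eq X hident a t, ih, Finset.card_insert_of_notMem ha, pow_succ]
          ring

end Char


lemma meas_eq_le_char (Y : Ω → ℕ) (hY : Measurable Y) (j : ℕ) :
    (ℙ {ω | Y ω = j}).toReal ≤
      (2 * Real.pi)⁻¹ * ∫ t in (-Real.pi)..Real.pi,
        ‖∫ ω, Complex.exp ((t * Y ω : ℝ) * Complex.I) ∂ℙ‖ := by
  have hpi : (0:ℝ) < Real.pi := Real.pi_pos
  set f : ℝ → Ω → ℂ := fun t ω => Complex.exp ((t * ((Y ω : ℝ) - j) : ℝ) * Complex.I) with hf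
  have hmeas : Measurable (fun p : ℝ × Ω => f p.1 p.2) := by
    apply Complex.measurable_exp.comp
    apply Measurable.mul _ measurable_const
    apply Complex.measurable_ofReal.comp
    exact measurable_fst.mul
      (((measurable_from_top (f := fun n : ℕ => (n:ℝ))).comp (hY.comp measurable_snd)).sub
        measurable_const)
  have hint : Integrable (fun p : ℝ × Ω => f p.1 p.2)
      ((volume.restrict (Set.Ioc (-Real.pi) Real.pi)).prod ℙ) := by
    refine Integrable.mono' (integrable_const 1) hmeas.aestronglyMeasurable ?_
    filter_upwards with p
    simp only [f]
    rw [Complex.norm_exp_ofReal_mul_I]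
  have swap := integral_integral_swap (μ := volume.restrict (Set.Ioc (-Real.pi) Real.pi))
    (ν := ℙ) (f := f) hint
  -- inner integral in t
  have hinner : ∀ ω, (∫ t in Set.Ioc (-Real.pi) Real.pi, f t ω ∂volume)
      = if Y ω = j then (2 * Real.pi : ℂ) else 0 := by
    intro ω
    have h1 : ((Y ω : ℝ) - j) = (((Y ω : ℤ) - j : ℤ) : ℝ) := by push_cast; ring
    rw [← intervalIntegral.integral_of_le (by linarith)]
    simp only [f, h1]
    rw [int_char ((Y ω : ℤ) - j)]
    congr 1
    simp only [eq_iff_iff, sub_eq_zero]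
    constructor
    · intro h
      have : (Y ω : ℤ) = j := by exact_mod_cast h
      exact_mod_cast this
    · intro h
      have : (Y ω : ℤ) = j := by exact_mod_cast h
      exact_mod_cast this
  have hset : MeasurableSet {ω | Y ω = j} := by
    have : {ω | Y ω = j} = Y ⁻¹' {j} := rfl
    rw [this]; exact hY (MeasurableSet.singleton j)
  have hωint : (∫ ω, (∫ t in Set.Ioc (-Real.pi) Real.pi, f t ω ∂volume) ∂ℙ)
      = ((2 * Real.pi * (ℙ {ω | Y ω = j}).toReal : ℝ) : ℂ) := by
    simp_rw [hinner]
    have : (fun ω => if Y ω = j then (2 * Real.pi : ℂ) else 0)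
        = Set.indicator {ω | Y ω = j} (fun _ => (2 * Real.pi : ℂ)) := by
      funext ω; rw [Set.indicator_apply]; rfl
    rw [this, integral_indicator_const _ hset]
    push_cast
    rw [Complex.real_smul]
    push_cast
    simp only [measureReal_def]
    ring
  -- the t-integrand has norm equal to the char function norm
  have hnorm : ∀ t : ℝ, ‖∫ ω, f t ω ∂ℙ‖ = ‖∫ ω, Complex.exp ((t * Y ω : ℝ) * Complex.I) ∂ℙ‖ := by
    intro t
    have : ∀ ω, f t ω = Complex.exp ((t * Y ω : ℝ) * Complex.I)
        * Complex.exp (((-(t * j) : ℝ) : ℂ) * Complex.I) := by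
      intro ω
      simp only [f]
      rw [← Complex.exp_add]
      congr 1
      push_cast
      ring
    simp_rw [this, integral_mul_const]
    rw [norm_mul, Complex.norm_exp_ofReal_mul_I, mul_one]
  -- put it together
  have hK : ∫ t in (-Real.pi)..Real.pi, (∫ ω, f t ω ∂ℙ)
      = ((2 * Real.pi * (ℙ {ω | Y ω = j}).toReal : ℝ) : ℂ) := by
    rw [intervalIntegral.integral_of_le (by linarith), swap, hωint]
  have hnn : (0:ℝ) ≤ 2 * Real.pi * (ℙ {ω | Y ω = j}).toReal := by positivity
  have hle : 2 * Real.pi * (ℙ {ω | Y ω = j}).toReal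
      ≤ ∫ t in (-Real.pi)..Real.pi, ‖∫ ω, Complex.exp ((t * Y ω : ℝ) * Complex.I) ∂ℙ‖ := by
    have h2 : ‖∫ t in (-Real.pi)..Real.pi, (∫ ω, f t ω ∂ℙ)‖
        ≤ ∫ t in (-Real.pi)..Real.pi, ‖∫ ω, f t ω ∂ℙ‖ :=
      intervalIntegral.norm_integral_le_integral_norm (by linarith)
    rw [hK] at h2
    rw [Complex.norm_real, Real.norm_of_nonneg hnn] at h2
    calc 2 * Real.pi * (ℙ {ω | Y ω = j}).toReal
        ≤ ∫ t in (-Real.pi)..Real.pi, ‖∫ ω, f t ω ∂ℙ‖ := h2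
      _ = _ := by
          apply intervalIntegral.integral_congr
          intro t _
          exact hnorm t
  rw [← mul_le_mul_iff_right₀ (show (0:ℝ) < 2 * Real.pi by positivity)]
  calc 2 * Real.pi * (ℙ {ω | Y ω = j}).toReal
      ≤ ∫ t in (-Real.pi)..Real.pi, ‖∫ ω, Complex.exp ((t * Y ω : ℝ) * Complex.I) ∂ℙ‖ := hle
    _ = 2 * Real.pi * ((2 * Real.pi)⁻¹ * ∫ t in (-Real.pi)..Real.pi,
          ‖∫ ω, Complex.exp ((t * Y ω : ℝ) * Complex.I) ∂ℙ‖) := by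
        rw [← mul_assoc, mul_inv_cancel₀ (by positivity), one_mul]




section NB
variable (X : ℕ → Ω → ℕ) (hXmeas : ∀ i, Measurable (X i))
  (hindep : iIndepFun X ℙ)
  (hident : ∀ i, IdentDistrib (X i) (X 0) ℙ ℙ)
  (a b : ℕ)

include hXmeas hindep hident in
lemma norm_cf_sq_le (t : ℝ) :
    ‖cf X t‖ ^ 2 ≤ 1 - ((ℙ {ω | X 0 ω = a}).toReal * (ℙ {ω | X 0 ω = b}).toReal)
      * (1 - Real.cos (((b : ℝ) - a) * t)) := by
  set p := (ℙ {ω | X 0 ω = a}).toReal * (ℙ {ω | X 0 ω = b}).toReal with hp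
  have hI : IndepFun (X 0) (X 1) ℙ := hindep.indepFun (by norm_num)
  have key := indep_integral_mul (hXmeas 0) (hXmeas 1) hI
    (fun n : ℕ => Complex.exp ((t * n : ℝ) * Complex.I))
    (fun n : ℕ => Complex.exp (((-(t * n) : ℝ) : ℂ) * Complex.I))
  have hconj : ∫ ω, Complex.exp (((-(t * X 1 ω) : ℝ) : ℂ) * Complex.I) ∂ℙ
      = (starRingEnd ℂ) (cf X t) := by
    have h1 : ∫ ω, Complex.exp (((-(t * X 1 ω) : ℝ) : ℂ) * Complex.I) ∂ℙ
        = ∫ ω, Complex.exp (((-(t * X 0 ω) : ℝ) : ℂ) * Complex.I) ∂ℙ :=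
      ((hident 1).comp (measurable_from_top
        (f := fun n : ℕ => Complex.exp (((-(t * n) : ℝ) : ℂ) * Complex.I)))).integral_eq
    rw [h1, cf, ← integral_conj]
    congr 1; funext ω
    rw [← Complex.exp_conj]
    congr 1
    simp [Complex.conj_I]
  -- product is expectation of cos
  have hprod : (cf X t) * (starRingEnd ℂ) (cf X t)
      = ∫ ω, Complex.exp (((t * X 0 ω - t * X 1 ω : ℝ) : ℂ) * Complex.I) ∂ℙ := by
    rw [← hconj]
    rw [show cf X t = ∫ ω, Complex.exp ((t * X 0 ω : ℝ) * Complex.I) ∂ℙ from rfl, ← key]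
    congr 1; funext ω
    rw [← Complex.exp_add]
    congr 1
    push_cast
    ring
  have hsq : ‖cf X t‖ ^ 2 = ∫ ω, Real.cos (t * X 0 ω - t * X 1 ω) ∂ℙ := by
    have hInt : Integrable (fun ω => Complex.exp (((t * X 0 ω - t * X 1 ω : ℝ) : ℂ) * Complex.I)) ℙ := by
      refine Integrable.mono' (integrable_const 1) ?_ ?_
      · apply (Complex.measurable_exp.comp ?_).aestronglyMeasurable
        apply Measurable.mul _ measurable_const
        apply Complex.measurable_ofReal.comp
        exact ((measurable_const.mul ((measurable_from_top (f := fun n : ℕ => (n:ℝ))).comp (hXmeas 0))).sub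
          ((measurable_const.mul ((measurable_from_top (f := fun n : ℕ => (n:ℝ))).comp (hXmeas 1)))))
      · filter_upwards with ω
        rw [Complex.norm_exp_ofReal_mul_I]
    have h0 : ‖cf X t‖ ^ 2 = ((cf X t) * (starRingEnd ℂ) (cf X t)).re := by
      rw [Complex.mul_conj, Complex.ofReal_re, ← Complex.sq_norm]
    have h1 := integral_re (𝕜 := ℂ) hInt
    rw [h0, hprod]
    rw [show ((∫ ω, Complex.exp (((t * X 0 ω - t * X 1 ω : ℝ) : ℂ) * Complex.I) ∂ℙ).re)
        = RCLike.re (∫ ω, Complex.exp (((t * X 0 ω - t * X 1 ω : ℝ) : ℂ) * Complex.I) ∂ℙ) from rfl,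
      ← h1]
    congr 1; funext ω
    rw [show RCLike.re (Complex.exp (((t * X 0 ω - t * X 1 ω : ℝ) : ℂ) * Complex.I))
        = (Complex.exp (((t * X 0 ω - t * X 1 ω : ℝ) : ℂ) * Complex.I)).re from rfl,
      Complex.exp_ofReal_mul_I_re]
  -- lower bound for 1 - E cos
  have hmeascos : Measurable (fun ω => Real.cos (t * X 0 ω - t * X 1 ω)) := by
    apply Real.measurable_cos.comp
    exact ((measurable_const.mul ((measurable_from_top (f := fun n : ℕ => (n:ℝ))).comp (hXmeas 0))).sub
      ((measurable_const.mul ((measurable_from_top (f := fun n : ℕ => (n:ℝ))).comp (hXmeas 1)))))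
  have hIntcos : Integrable (fun ω => Real.cos (t * X 0 ω - t * X 1 ω)) ℙ := by
    refine Integrable.mono' (integrable_const 1) hmeascos.aestronglyMeasurable ?_
    filter_upwards with ω
    rw [Real.norm_eq_abs]
    exact Real.abs_cos_le_one _
  set S : Set Ω := {ω | X 0 ω = b} ∩ {ω | X 1 ω = a} with hS
  have hSmeas : MeasurableSet S := by
    apply MeasurableSet.inter
    · exact (hXmeas 0) (MeasurableSet.singleton b)
    · exact (hXmeas 1) (MeasurableSet.singleton a)
  have hmeasS : (ℙ S).toReal = p := by
    have h1 : ℙ S = ℙ {ω | X 0 ω = b} * ℙ {ω | X 1 ω = a} :=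
      hI.measure_inter_preimage_eq_mul {b} {a} (MeasurableSet.singleton b)
        (MeasurableSet.singleton a)
    have h2 : ℙ {ω | X 1 ω = a} = ℙ {ω | X 0 ω = a} := by
      have hm1 : ℙ {ω | X 1 ω = a} = (Measure.map (X 1) ℙ) {a} := by
        rw [Measure.map_apply (hXmeas 1) (MeasurableSet.singleton a)]; rfl
      have hm0 : ℙ {ω | X 0 ω = a} = (Measure.map (X 0) ℙ) {a} := by
        rw [Measure.map_apply (hXmeas 0) (MeasurableSet.singleton a)]; rfl
      rw [hm1, hm0, (hident 1).map_eq]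
    rw [h1, h2, ENNReal.toReal_mul, hp, mul_comm]
  have hind_le : ∀ ω, S.indicator (fun _ => 1 - Real.cos (((b:ℝ) - a) * t)) ω
      ≤ 1 - Real.cos (t * X 0 ω - t * X 1 ω) := by
    intro ω
    rw [Set.indicator_apply]
    by_cases hω : ω ∈ S
    · rw [if_pos hω]
      obtain ⟨h0, h1⟩ := hω
      simp only [Set.mem_setOf_eq] at h0 h1
      rw [h0, h1]
      have : t * (b:ℝ) - t * (a:ℝ) = ((b:ℝ) - a) * t := by ring
      rw [this]
    · rw [if_neg hω]
      have := Real.cos_le_one (t * X 0 ω - t * X 1 ω)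
      linarith
  have hmono : p * (1 - Real.cos (((b:ℝ) - a) * t))
      ≤ ∫ ω, (1 - Real.cos (t * X 0 ω - t * X 1 ω)) ∂ℙ := by
    have hIl : Integrable (S.indicator (fun _ => 1 - Real.cos (((b:ℝ) - a) * t))) ℙ :=
      (integrable_const _).indicator hSmeas
    have hIr : Integrable (fun ω => 1 - Real.cos (t * X 0 ω - t * X 1 ω)) ℙ :=
      (integrable_const 1).sub hIntcos
    calc p * (1 - Real.cos (((b:ℝ) - a) * t))
        = ∫ ω, S.indicator (fun _ => 1 - Real.cos (((b:ℝ) - a) * t)) ω ∂ℙ := by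
          rw [integral_indicator_const _ hSmeas, smul_eq_mul, measureReal_def, hmeasS]
      _ ≤ _ := integral_mono hIl hIr hind_le
  have hint1 : ∫ ω, (1 - Real.cos (t * X 0 ω - t * X 1 ω)) ∂ℙ
      = 1 - ∫ ω, Real.cos (t * X 0 ω - t * X 1 ω) ∂ℙ := by
    rw [integral_sub (integrable_const 1) hIntcos]
    simp
  rw [hsq]
  rw [hint1] at hmono
  linarith

end NB


lemma periodic_subst (c : ℝ) (k : ℕ) (hk : 1 ≤ k) :
    ∫ t in (-Real.pi)..Real.pi, Real.exp (-c * (1 - Real.cos ((k:ℝ) * t)))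
      = ∫ t in (-Real.pi)..Real.pi, Real.exp (-c * (1 - Real.cos t)) := by
  set g : ℝ → ℝ := fun u => Real.exp (-c * (1 - Real.cos u)) with hg
  have hgc : Continuous g := by continuity
  have hper : Function.Periodic g (2 * Real.pi) := by
    intro x; simp only [g, Real.cos_add_two_pi]
  have hint : ∀ t₁ t₂ : ℝ, IntervalIntegrable g MeasureSpace.volume t₁ t₂ :=
    fun t₁ t₂ => hgc.intervalIntegrable t₁ t₂
  have hk0 : (k:ℝ) ≠ 0 := by positivity
  have h1 : ∫ t in (-Real.pi)..Real.pi, g ((k:ℝ) * t)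
      = (k:ℝ)⁻¹ • ∫ t in ((k:ℝ) * (-Real.pi))..((k:ℝ) * Real.pi), g t :=
    intervalIntegral.integral_comp_mul_left g hk0
  have h2 : (k:ℝ) * Real.pi = (k:ℝ) * (-Real.pi) + (k:ℤ) • (2 * Real.pi) := by
    rw [zsmul_eq_mul]; push_cast; ring
  have h3 : ∫ t in ((k:ℝ) * (-Real.pi))..((k:ℝ) * Real.pi), g t
      = (k:ℤ) • ∫ t in ((k:ℝ) * (-Real.pi))..((k:ℝ) * (-Real.pi) + 2 * Real.pi), g t := by
    rw [h2]
    exact hper.intervalIntegral_add_zsmul_eq (k:ℤ) ((k:ℝ) * (-Real.pi)) hint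
  have h4 : ∫ t in ((k:ℝ) * (-Real.pi))..((k:ℝ) * (-Real.pi) + 2 * Real.pi), g t
      = ∫ t in (-Real.pi)..(-Real.pi + 2 * Real.pi), g t :=
    hper.intervalIntegral_add_eq ((k:ℝ) * (-Real.pi)) (-Real.pi)
  have h5 : -Real.pi + 2 * Real.pi = Real.pi := by ring
  rw [h1, h3, h4, h5, zsmul_eq_mul, smul_eq_mul, ← mul_assoc]
  have : ((k:ℝ))⁻¹ * ((k:ℤ):ℝ) = 1 := by push_cast; exact inv_mul_cancel₀ hk0
  rw [this, one_mul]

lemma gauss_bound (c : ℝ) (hc : 0 < c) :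
    ∫ t in (-Real.pi)..Real.pi, Real.exp (-c * (1 - Real.cos t))
      ≤ Real.sqrt (Real.pi ^ 3 / c) := by
  have hpi := Real.pi_pos
  set b : ℝ := 2 * c / Real.pi ^ 2 with hb
  have hbpos : 0 < b := by positivity
  have hmono : ∫ t in (-Real.pi)..Real.pi, Real.exp (-c * (1 - Real.cos t))
      ≤ ∫ t in (-Real.pi)..Real.pi, Real.exp (-b * t ^ 2) := by
    apply intervalIntegral.integral_mono_on (by linarith)
    · exact (by continuity : Continuous fun t => Real.exp (-c * (1 - Real.cos t))).intervalIntegrable _ _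
    · exact (by continuity : Continuous fun t => Real.exp (-b * t ^ 2)).intervalIntegrable _ _
    · intro x hx
      apply Real.exp_le_exp.2
      have habs : |x| ≤ Real.pi := abs_le.2 ⟨hx.1, hx.2⟩
      have := Real.cos_le_one_sub_mul_cos_sq habs
      have h2 : 2 / Real.pi ^ 2 * x ^ 2 ≤ 1 - Real.cos x := by linarith
      calc -c * (1 - Real.cos x) ≤ -c * (2 / Real.pi ^ 2 * x ^ 2) := by nlinarith
        _ = -b * x ^ 2 := by rw [hb]; ring
  have hIg : Integrable (fun t : ℝ => Real.exp (-b * t ^ 2)) := integrable_exp_neg_mul_sq hbpos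
  have h6 : ∫ t in (-Real.pi)..Real.pi, Real.exp (-b * t ^ 2)
      ≤ ∫ t : ℝ, Real.exp (-b * t ^ 2) := by
    rw [intervalIntegral.integral_of_le (by linarith)]
    apply setIntegral_le_integral hIg
    filter_upwards with t
    positivity
  have h7 : (∫ t : ℝ, Real.exp (-b * t ^ 2)) = Real.sqrt (Real.pi / b) := integral_gaussian b
  have h8 : Real.pi / b = Real.pi ^ 3 / (2 * c) := by
    rw [hb]; field_simp
  have h9 : Real.sqrt (Real.pi / b) ≤ Real.sqrt (Real.pi ^ 3 / c) := by
    apply Real.sqrt_le_sqrt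
    rw [h8]
    apply div_le_div_of_nonneg_left (by positivity) (by positivity) (by linarith)
  linarith [hmono, h6, h7.le, h7.ge, h9]




lemma cf_continuous (X : ℕ → Ω → ℕ) (hXmeas : ∀ i, Measurable (X i)) :
    Continuous (cf X) := by
  apply continuous_of_dominated (bound := fun _ => (1:ℝ))
  · intro t
    apply Measurable.aestronglyMeasurable
    apply Complex.measurable_exp.comp
    apply Measurable.mul _ measurable_const
    exact Complex.measurable_ofReal.comp
      (measurable_const.mul ((measurable_from_top (f := fun n : ℕ => (n:ℝ))).comp (hXmeas 0)))
  · intro t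
    filter_upwards with ω
    rw [Complex.norm_exp_ofReal_mul_I]
  · exact integrable_const 1
  · filter_upwards with ω
    have : Continuous fun t : ℝ => ((t * (X 0 ω) : ℝ) : ℂ) * Complex.I := by continuity
    exact Complex.continuous_exp.comp this

lemma concentration (X : ℕ → Ω → ℕ) (hXmeas : ∀ i, Measurable (X i))
    (hindep : iIndepFun X ℙ)
    (hident : ∀ i, IdentDistrib (X i) (X 0) ℙ ℙ) (a b : ℕ) (hab : a < b)
    (hpa : ℙ {ω | X 0 ω = a} ≠ 0) (hpb : ℙ {ω | X 0 ω = b} ≠ 0)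
    (s : Finset ℕ) (hs : 1 ≤ s.card) (j : ℕ) :
    (ℙ {ω | (∑ i ∈ s, X i ω) = j}).toReal ≤
      (Real.sqrt (2 * Real.pi ^ 3 /
          ((ℙ {ω | X 0 ω = a}).toReal * (ℙ {ω | X 0 ω = b}).toReal)) / (2 * Real.pi))
        / Real.sqrt s.card := by
  have hpi := Real.pi_pos
  set p : ℝ := (ℙ {ω | X 0 ω = a}).toReal * (ℙ {ω | X 0 ω = b}).toReal with hp
  have hppos : 0 < p := by
    apply _root_.mul_pos
    · exact ENNReal.toReal_pos hpa (measure_ne_top _ _)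
    · exact ENNReal.toReal_pos hpb (measure_ne_top _ _)
  set r : ℕ := s.card with hr
  have hrpos : (0:ℝ) < r := by exact_mod_cast hs
  -- pointwise bound on the characteristic function
  have hcf : ∀ t : ℝ, ‖cf X t‖ ≤ Real.exp (-(p/2) * (1 - Real.cos (((b:ℝ) - a) * t))) := by
    intro t
    set c : ℝ := 1 - Real.cos (((b:ℝ) - a) * t) with hc
    have hc0 : 0 ≤ c := by
      have := Real.cos_le_one (((b:ℝ) - a) * t); simp only [hc]; linarith
    have h := norm_cf_sq_le X hXmeas hindep hident a b t
    have hexp : 1 - p * c ≤ Real.exp (-(p * c)) := by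
      have := Real.add_one_le_exp (-(p * c)); linarith
    have hsq2 : ‖cf X t‖ ^ 2 ≤ (Real.exp (-(p/2) * c)) ^ 2 := by
      have h2 : (Real.exp (-(p/2) * c)) ^ 2 = Real.exp (-(p * c)) := by
        rw [← Real.exp_nat_mul]
        congr 1
        push_cast
        ring
      rw [h2]
      exact h.trans hexp
    calc ‖cf X t‖ = Real.sqrt (‖cf X t‖ ^ 2) := (Real.sqrt_sq (norm_nonneg _)).symm
      _ ≤ Real.sqrt ((Real.exp (-(p/2) * c)) ^ 2) := Real.sqrt_le_sqrt hsq2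
      _ = Real.exp (-(p/2) * c) := Real.sqrt_sq (Real.exp_pos _).le
  -- main chain
  have hY : Measurable (fun ω => ∑ i ∈ s, X i ω) := Finset.measurable_sum s (fun i _ => hXmeas i)
  have h1 := meas_eq_le_char (fun ω => ∑ i ∈ s, X i ω) hY j
  have h2 : ∀ t : ℝ, ‖∫ ω, Complex.exp ((t * (∑ i ∈ s, X i ω) : ℝ) * Complex.I) ∂ℙ‖
      = ‖cf X t‖ ^ r := by
    intro t
    rw [char_sum X hXmeas hindep hident s t, norm_pow]
  have hk : 1 ≤ b - a := by omega
  have hcast : ((b - a : ℕ) : ℝ) = (b:ℝ) - a := by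
    push_cast [Nat.cast_sub hab.le]; ring
  have h3 : ∫ t in (-Real.pi)..Real.pi, ‖∫ ω, Complex.exp ((t * (∑ i ∈ s, X i ω) : ℝ) * Complex.I) ∂ℙ‖
      ≤ ∫ t in (-Real.pi)..Real.pi, Real.exp (-((r:ℝ) * p / 2) * (1 - Real.cos (((b - a : ℕ):ℝ) * t))) := by
    apply intervalIntegral.integral_mono_on (by linarith)
    · exact (Continuous.congr ((cf_continuous X hXmeas).norm.pow r)
        (fun t => (h2 t).symm)).intervalIntegrable _ _
    · exact (by continuity : Continuous fun t => Real.exp (-((r:ℝ) * p / 2) * (1 - Real.cos (((b - a : ℕ):ℝ) * t)))).intervalIntegrable _ _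
    · intro t _
      rw [h2 t]
      calc ‖cf X t‖ ^ r ≤ (Real.exp (-(p/2) * (1 - Real.cos (((b:ℝ) - a) * t)))) ^ r :=
            pow_le_pow_left₀ (norm_nonneg _) (hcf t) r
        _ = Real.exp (-((r:ℝ) * p / 2) * (1 - Real.cos (((b - a : ℕ):ℝ) * t))) := by
            rw [← Real.exp_nat_mul, hcast]
            congr 1
            ring
  have h4 := periodic_subst ((r:ℝ) * p / 2) (b - a) hk
  have h5 := gauss_bound ((r:ℝ) * p / 2) (by positivity)
  have h6 : Real.sqrt (Real.pi ^ 3 / ((r:ℝ) * p / 2))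
      = Real.sqrt (2 * Real.pi ^ 3 / p) / Real.sqrt r := by
    rw [← Real.sqrt_div (by positivity) (r:ℝ)]
    congr 1
    field_simp
  have h7 : (ℙ {ω | (∑ i ∈ s, X i ω) = j}).toReal
      ≤ (2 * Real.pi)⁻¹ * (Real.sqrt (2 * Real.pi ^ 3 / p) / Real.sqrt r) := by
    calc (ℙ {ω | (∑ i ∈ s, X i ω) = j}).toReal
        ≤ (2 * Real.pi)⁻¹ * ∫ t in (-Real.pi)..Real.pi,
            ‖∫ ω, Complex.exp ((t * (∑ i ∈ s, X i ω) : ℝ) * Complex.I) ∂ℙ‖ := h1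
      _ ≤ (2 * Real.pi)⁻¹ * Real.sqrt (Real.pi ^ 3 / ((r:ℝ) * p / 2)) := by
          apply mul_le_mul_of_nonneg_left _ (by positivity)
          rw [← h6] at *
          calc _ ≤ _ := h3
            _ = _ := h4
            _ ≤ _ := h5
      _ = (2 * Real.pi)⁻¹ * (Real.sqrt (2 * Real.pi ^ 3 / p) / Real.sqrt r) := by rw [h6]
  calc (ℙ {ω | (∑ i ∈ s, X i ω) = j}).toReal
      ≤ (2 * Real.pi)⁻¹ * (Real.sqrt (2 * Real.pi ^ 3 / p) / Real.sqrt r) := h7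
    _ = (Real.sqrt (2 * Real.pi ^ 3 / p) / (2 * Real.pi)) / Real.sqrt r := by ring



lemma cheb (X : ℕ → Ω → ℕ) (hXmeas : ∀ i, Measurable (X i))
    (hindep : iIndepFun X ℙ)
    (hident : ∀ i, IdentDistrib (X i) (X 0) ℙ ℙ)
    (hmean : ∫ ω, (X 0 ω : ℝ) ∂ℙ = 1)
    (hsq : Integrable (fun ω => (X 0 ω : ℝ) ^ 2) ℙ)
    (s : Finset ℕ) (c : ℝ) (hc : 0 < c) :
    ℙ {ω | c ≤ |(∑ i ∈ s, (X i ω : ℝ)) - s.card|}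
      ≤ ENNReal.ofReal ((s.card : ℝ) * variance (fun ω => (X 0 ω : ℝ)) ℙ / c ^ 2) := by
  have hcast : Measurable (fun n : ℕ => (n : ℝ)) := measurable_from_top
  have hmeasR : ∀ i, Measurable (fun ω => (X i ω : ℝ)) := fun i => hcast.comp (hXmeas i)
  have hid : ∀ i, IdentDistrib (fun ω => (X i ω : ℝ)) (fun ω => (X 0 ω : ℝ)) ℙ ℙ :=
    fun i => (hident i).comp hcast
  have hmem0 : MemLp (fun ω => (X 0 ω : ℝ)) 2 ℙ :=
    (memLp_two_iff_integrable_sq (hmeasR 0).aestronglyMeasurable).2 hsq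
  have hmemi : ∀ i, MemLp (fun ω => (X i ω : ℝ)) 2 ℙ := fun i => (hid i).symm.memLp_snd hmem0
  set Y : Ω → ℝ := fun ω => ∑ i ∈ s, (X i ω : ℝ) with hY
  have hmemY : MemLp Y 2 ℙ := memLp_finset_sum s (fun i _ => hmemi i)
  have hEi : ∀ i, ∫ ω, (X i ω : ℝ) ∂ℙ = 1 := fun i => (hid i).integral_eq.trans hmean
  have hEY : ∫ ω, Y ω ∂ℙ = s.card := by
    rw [hY]
    rw [integral_finset_sum s (fun i _ => (hmemi i).integrable one_le_two)]
    simp [hEi]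
  have hvar : variance Y ℙ = (s.card : ℝ) * variance (fun ω => (X 0 ω : ℝ)) ℙ := by
    have hpair : Set.Pairwise ↑s
        (fun i j => IndepFun (fun ω => (X i ω : ℝ)) (fun ω => (X j ω : ℝ)) ℙ) := by
      intro i _ j _ hij
      exact (hindep.indepFun hij).comp hcast hcast
    have h1 := IndepFun.variance_sum (μ := ℙ) (X := fun i => fun ω => (X i ω : ℝ)) (s := s)
      (fun i _ => hmemi i) hpair
    have h2 : (∑ i ∈ s, fun ω => (X i ω : ℝ)) = Y := by
      funext ω; rw [hY]; simp [Finset.sum_apply]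
    rw [h2] at h1
    rw [h1]
    have h3 : ∀ i ∈ s, variance (fun ω => (X i ω : ℝ)) ℙ
        = variance (fun ω => (X 0 ω : ℝ)) ℙ := fun i _ => (hid i).variance_eq
    rw [Finset.sum_congr rfl h3, Finset.sum_const, nsmul_eq_mul]
  have h := meas_ge_le_variance_div_sq (μ := ℙ) hmemY hc
  rw [hEY, hvar] at h
  exact h

lemma split_bound {A B : Ω → ℕ} (hA : Measurable A) (hB : Measurable B)
    (hAB : IndepFun A B ℙ) (G : Set ℕ) (z : ℤ) (QB : ℝ) (hQB0 : 0 ≤ QB)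
    (hQB : ∀ y : ℕ, ℙ {ω | B ω = y} ≤ ENNReal.ofReal QB) :
    ℙ ({ω | A ω ∈ G} ∩ {ω | (A ω : ℤ) + (B ω : ℤ) = z})
      ≤ ENNReal.ofReal QB * ℙ {ω | A ω ∈ G} := by
  classical
  set U : ℕ → Set Ω := fun j =>
    A ⁻¹' ({j} ∩ G) ∩ B ⁻¹' {y : ℕ | (y : ℤ) = z - j} with hU
  set V : ℕ → Set Ω := fun j => A ⁻¹' ({j} ∩ G) with hV
  have hsub : ({ω | A ω ∈ G} ∩ {ω | (A ω : ℤ) + (B ω : ℤ) = z}) ⊆ ⋃ j, U j := by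
    intro ω hω
    obtain ⟨h1, h2⟩ := hω
    refine Set.mem_iUnion.2 ⟨A ω, ⟨⟨rfl, h1⟩, ?_⟩⟩
    simp only [Set.mem_setOf_eq, Set.mem_preimage] at h2 ⊢
    omega
  have hUV : ∀ j, ℙ (U j) ≤ ENNReal.ofReal QB * ℙ (V j) := by
    intro j
    rw [hU, hAB.measure_inter_preimage_eq_mul ({j} ∩ G) {y : ℕ | (y : ℤ) = z - j}
      trivial trivial, mul_comm]
    apply mul_le_mul' _ le_rfl
    by_cases hz : 0 ≤ z - j
    · have he : {y : ℕ | (y : ℤ) = z - j} = {(z - j).toNat} := by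
        ext y; simp only [Set.mem_setOf_eq, Set.mem_singleton_iff]; omega
      rw [he]
      exact hQB ((z - j).toNat)
    · have he : {y : ℕ | (y : ℤ) = z - j} = ∅ := by
        ext y; simp only [Set.mem_setOf_eq, Set.mem_empty_iff_false, iff_false]; omega
      rw [he]
      simp
  have hVdisj : Pairwise (Function.onFun Disjoint V) := by
    intro i j hij
    simp only [Function.onFun, hV]
    apply Set.disjoint_left.2
    intro ω hωi hωj
    exact hij (hωi.1.symm.trans hωj.1)
  have hVmeas : ∀ j, MeasurableSet (V j) := fun j => hA trivial
  have hVsub : (⋃ j, V j) ⊆ {ω | A ω ∈ G} := by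
    intro ω hω
    obtain ⟨j, hj⟩ := Set.mem_iUnion.1 hω
    exact hj.2
  calc ℙ ({ω | A ω ∈ G} ∩ {ω | (A ω : ℤ) + (B ω : ℤ) = z})
      ≤ ℙ (⋃ j, U j) := measure_mono hsub
    _ ≤ ∑' j, ℙ (U j) := measure_iUnion_le U
    _ ≤ ∑' j, ENNReal.ofReal QB * ℙ (V j) := ENNReal.tsum_le_tsum hUV
    _ = ENNReal.ofReal QB * ∑' j, ℙ (V j) := ENNReal.tsum_mul_left
    _ ≤ ENNReal.ofReal QB * ℙ (⋃ j, V j) := by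
        apply mul_le_mul' le_rfl
        exact tsum_meas_le_meas_iUnion_of_disjoint ℙ hVmeas hVdisj
    _ ≤ ENNReal.ofReal QB * ℙ {ω | A ω ∈ G} := mul_le_mul' le_rfl (measure_mono hVsub)



lemma indep_block_sums (X : ℕ → Ω → ℕ) (hXmeas : ∀ i, Measurable (X i))
    (hindep : iIndepFun X ℙ) (s t : Finset ℕ) (hst : Disjoint s t) :
    IndepFun (fun ω => ∑ i ∈ s, X i ω) (fun ω => ∑ i ∈ t, X i ω) ℙ := by
  have h := hindep.indepFun_finset s t hst hXmeas
  have hms : Measurable (fun v : (i : s) → ℕ => ∑ i, v i) :=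
    Finset.measurable_sum Finset.univ (fun i _ => measurable_pi_apply i)
  have hmt : Measurable (fun v : (i : t) → ℕ => ∑ i, v i) :=
    Finset.measurable_sum Finset.univ (fun i _ => measurable_pi_apply i)
  have h2 := h.comp hms hmt
  have e1 : ((fun v : (i : s) → ℕ => ∑ i, v i) ∘ (fun ω (i : s) => X i ω))
      = fun ω => ∑ i ∈ s, X i ω := by
    funext ω
    exact Finset.sum_coe_sort s (fun i => X i ω)
  have e2 : ((fun v : (i : t) → ℕ => ∑ i, v i) ∘ (fun ω (i : t) => X i ω))
      = fun ω => ∑ i ∈ t, X i ω := by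
    funext ω
    exact Finset.sum_coe_sort t (fun i => X i ω)
  rwa [e1, e2] at h2

lemma degenerate_variance_zero (X : ℕ → Ω → ℕ) (hXmeas : ∀ i, Measurable (X i))
    (hmean : ∫ ω, (X 0 ω : ℝ) ∂ℙ = 1)
    (hsq : Integrable (fun ω => (X 0 ω : ℝ) ^ 2) ℙ)
    (hdeg : ¬ ∃ a b : ℕ, a < b ∧ ℙ {ω | X 0 ω = a} ≠ 0 ∧ ℙ {ω | X 0 ω = b} ≠ 0) :
    variance (fun ω => (X 0 ω : ℝ)) ℙ = 0 := by
  push_neg at hdeg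
  -- there is an atom
  have hex : ∃ u : ℕ, ℙ {ω | X 0 ω = u} ≠ 0 := by
    by_contra h
    push_neg at h
    have huniv : (Set.univ : Set Ω) = ⋃ u : ℕ, {ω | X 0 ω = u} := by
      ext ω; simp
    have : ℙ (Set.univ : Set Ω) = 0 := by
      rw [huniv]
      exact measure_iUnion_null (fun u => h u)
    simp at this
  obtain ⟨u, hu⟩ := hex
  have huniq : ∀ v : ℕ, v ≠ u → ℙ {ω | X 0 ω = v} = 0 := by
    intro v hv
    rcases lt_or_gt_of_ne hv with h | h
    · by_contra hvz
      exact hu (hdeg v u h hvz)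
    · by_contra hvz
      exact hvz (hdeg u v h hu)
  have hae : ∀ᵐ ω ∂ℙ, X 0 ω = u := by
    have hnull : ℙ {ω | X 0 ω ≠ u} = 0 := by
      have hsub : {ω | X 0 ω ≠ u} ⊆ ⋃ v : ℕ, (if v = u then ∅ else {ω | X 0 ω = v}) := by
        intro ω hω
        refine Set.mem_iUnion.2 ⟨X 0 ω, ?_⟩
        rw [if_neg hω]
        exact rfl
      refine measure_mono_null hsub (measure_iUnion_null fun v => ?_)
      by_cases hv : v = u
      · rw [if_pos hv]; simp
      · rw [if_neg hv]; exact huniq v hv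
    exact hnull
  have haeR : (fun ω => (X 0 ω : ℝ)) =ᵐ[ℙ] (fun _ => (u : ℝ)) := by
    filter_upwards [hae] with ω hω
    rw [hω]
  have hu1 : (u : ℝ) = 1 := by
    have h1 : ∫ ω, (X 0 ω : ℝ) ∂ℙ = ∫ _ω, (u : ℝ) ∂ℙ := integral_congr_ae haeR
    rw [integral_const] at h1
    simp at h1
    rw [hmean] at h1
    exact h1.symm
  have hmem0 : MemLp (fun ω => (X 0 ω : ℝ)) 2 ℙ :=
    (memLp_two_iff_integrable_sq
      ((measurable_from_top (f := fun n : ℕ => (n:ℝ))).comp (hXmeas 0)).aestronglyMeasurable).2 hsq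
  rw [variance_eq_sub hmem0]
  have hsq1 : ∫ ω, ((fun ω => (X 0 ω : ℝ)) ω) ^ 2 ∂ℙ = 1 := by
    have : (fun ω => ((X 0 ω : ℝ)) ^ 2) =ᵐ[ℙ] (fun _ => (1 : ℝ)) := by
      filter_upwards [hae] with ω hω
      rw [hω, hu1]
      norm_num
    rw [integral_congr_ae this, integral_const]
    simp
  simp only [Pi.pow_apply] at hsq1 ⊢
  rw [hsq1, hmean]
  norm_num

end AuxLemmas

/-- If `ξ` is a nonnegative-integer valued random variable with mean `1` and finite second
moment, and `S_n` is the sum of `n` i.i.d. copies of `ξ`, then there is a constant `C`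
such that `P(S_n = n - m) ≤ C · n^(1/2) / m²` for all `n ≥ 1` and all integers `m ≠ 0`. -/
theorem local_bound_sqrt_n_m_sq
    {Ω : Type} [MeasureSpace Ω] [IsProbabilityMeasure (ℙ : Measure Ω)]
    (X : ℕ → Ω → ℕ) (hXmeas : ∀ i, Measurable (X i))
    (hindep : iIndepFun X ℙ)
    (hident : ∀ i, IdentDistrib (X i) (X 0) ℙ ℙ)
    (hmean : ∫ ω, (X 0 ω : ℝ) ∂ℙ = 1)
    (hsq : Integrable (fun ω => (X 0 ω : ℝ) ^ 2) ℙ)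
    :
    ∃ C : ℝ, ∀ n : ℕ, 1 ≤ n → ∀ m : ℤ, m ≠ 0 →
      (ℙ {ω | (∑ i ∈ Finset.range n, (X i ω : ℤ)) = (n : ℤ) - m}).toReal
        ≤ C * Real.sqrt n / (m : ℝ) ^ 2 := by
  set σ2 : ℝ := variance (fun ω => (X 0 ω : ℝ)) ℙ with hσ2def
  have hσ2nn : 0 ≤ σ2 := variance_nonneg _ _
  -- pure Chebyshev bound, valid for every n and m ≠ 0
  have hchebE : ∀ n : ℕ, ∀ m : ℤ, m ≠ 0 →
      (ℙ {ω | (∑ i ∈ Finset.range n, (X i ω : ℤ)) = (n : ℤ) - m}).toReal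
        ≤ (n : ℝ) * σ2 / (m : ℝ) ^ 2 := by
    intro n m hm
    have hm0 : ((m : ℝ)) ≠ 0 := by exact_mod_cast hm
    have hmpos : 0 < |(m : ℝ)| := abs_pos.2 hm0
    have hsubset : {ω | (∑ i ∈ Finset.range n, (X i ω : ℤ)) = (n : ℤ) - m}
        ⊆ {ω | |(m : ℝ)| ≤ |(∑ i ∈ Finset.range n, (X i ω : ℝ)) - ((Finset.range n).card : ℝ)|} := by
      intro ω hω
      simp only [Set.mem_setOf_eq] at hω ⊢
      have hR : (∑ i ∈ Finset.range n, (X i ω : ℝ)) = (n : ℝ) - m := by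
        have := congrArg (fun z : ℤ => (z : ℝ)) hω
        push_cast at this
        exact this
      rw [Finset.card_range, hR]
      rw [show (n : ℝ) - m - n = -(m : ℝ) by ring, abs_neg]
    have h1 := cheb X hXmeas hindep hident hmean hsq (Finset.range n) |(m : ℝ)| hmpos
    have h2 := (measure_mono hsubset).trans h1
    have h3 := ENNReal.toReal_le_of_le_ofReal (by positivity) h2
    rw [Finset.card_range] at h3
    calc (ℙ {ω | (∑ i ∈ Finset.range n, (X i ω : ℤ)) = (n : ℤ) - m}).toReal
        ≤ (n : ℝ) * σ2 / |(m : ℝ)| ^ 2 := h3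
      _ = (n : ℝ) * σ2 / (m : ℝ) ^ 2 := by rw [_root_.sq_abs]
  by_cases hdeg : ∃ a b : ℕ, a < b ∧ ℙ {ω | X 0 ω = a} ≠ 0 ∧ ℙ {ω | X 0 ω = b} ≠ 0
  swap
  · -- degenerate case : variance is zero
    refine ⟨0, fun n hn m hm => ?_⟩
    have hz := degenerate_variance_zero X hXmeas hmean hsq hdeg
    have := hchebE n m hm
    rw [hσ2def.trans hz] at this
    simp only [mul_zero, zero_div] at this
    calc (ℙ {ω | (∑ i ∈ Finset.range n, (X i ω : ℤ)) = (n : ℤ) - m}).toReal ≤ 0 := this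
      _ = 0 * Real.sqrt n / (m : ℝ) ^ 2 := by ring
  obtain ⟨a, b, hab, hpa, hpb⟩ := hdeg
  set C0 : ℝ := Real.sqrt (2 * Real.pi ^ 3 /
      ((ℙ {ω | X 0 ω = a}).toReal * (ℙ {ω | X 0 ω = b}).toReal)) / (2 * Real.pi) with hC0def
  have hC0nn : 0 ≤ C0 := by positivity
  refine ⟨σ2 + 8 * Real.sqrt 3 * C0 * σ2, fun n hn m hm => ?_⟩
  set C : ℝ := σ2 + 8 * Real.sqrt 3 * C0 * σ2 with hCdef
  have hm0 : ((m : ℝ)) ≠ 0 := by exact_mod_cast hm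
  have hmsq : 0 < (m : ℝ) ^ 2 := by positivity
  have hmpos : 0 < |(m : ℝ)| := abs_pos.2 hm0
  rcases Nat.lt_or_ge n 2 with hn2 | hn2
  · -- n = 1
    have hn1 : n = 1 := by omega
    subst hn1
    have h1 := hchebE 1 m hm
    have hg : C * Real.sqrt ((1:ℕ):ℝ) / (m:ℝ)^2 = C / (m:ℝ)^2 := by norm_num
    rw [hg]
    have hσC : σ2 ≤ C := by
      rw [hCdef]
      nlinarith [mul_nonneg (mul_nonneg (mul_nonneg (by norm_num : (0:ℝ) ≤ 8)
        (Real.sqrt_nonneg 3)) hC0nn) hσ2nn]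
    calc (ℙ {ω | (∑ i ∈ Finset.range 1, (X i ω : ℤ)) = ((1:ℕ) : ℤ) - m}).toReal
        ≤ ((1:ℕ) : ℝ) * σ2 / (m : ℝ) ^ 2 := h1
      _ = σ2 / (m : ℝ) ^ 2 := by norm_num
      _ ≤ C / (m : ℝ) ^ 2 := by gcongr
  · -- main case : n ≥ 2
    set h : ℕ := n / 2 with hhdef
    have hh1 : 1 ≤ h := by omega
    have hhn : h ≤ n := by omega
    have hnh1 : 1 ≤ n - h := by omega
    have hhle : h ≤ n - h := by omega
    have h3h : n ≤ 3 * h := by omega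
    have h3nh : n ≤ 3 * (n - h) := by omega
    set A : Ω → ℕ := fun ω => ∑ i ∈ Finset.range h, X i ω with hAdef
    set B : Ω → ℕ := fun ω => ∑ i ∈ Finset.Ico h n, X i ω with hBdef
    have hAm : Measurable A := Finset.measurable_sum _ (fun i _ => hXmeas i)
    have hBm : Measurable B := Finset.measurable_sum _ (fun i _ => hXmeas i)
    have hdisj : Disjoint (Finset.range h) (Finset.Ico h n) := by
      rw [Finset.disjoint_left]
      intro i hi hi2
      rw [Finset.mem_range] at hi
      rw [Finset.mem_Ico] at hi2
      omega
    have hABind : IndepFun A B ℙ := indep_block_sums X hXmeas hindep _ _ hdisj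
    have hsplitN : ∀ ω, (∑ i ∈ Finset.range n, X i ω) = A ω + B ω := by
      intro ω
      rw [hAdef, hBdef]
      simp only [Finset.range_eq_Ico]
      exact (Finset.sum_Ico_consecutive _ (Nat.zero_le h) hhn).symm
    have hcard1 : (Finset.range h).card = h := Finset.card_range h
    have hcard2 : (Finset.Ico h n).card = n - h := Nat.card_Ico h n
    set QA : ℝ := C0 / Real.sqrt h with hQAdef
    set QB : ℝ := C0 / Real.sqrt ((n - h : ℕ) : ℝ) with hQBdef
    have hQAnn : 0 ≤ QA := by positivity
    have hQBnn : 0 ≤ QB := by positivity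
    have hQAy : ∀ y : ℕ, ℙ {ω | A ω = y} ≤ ENNReal.ofReal QA := by
      intro y
      rw [ENNReal.le_ofReal_iff_toReal_le (measure_ne_top _ _) hQAnn]
      have hcc := concentration X hXmeas hindep hident a b hab hpa hpb (Finset.range h)
        (by rw [hcard1]; omega) y
      rw [hcard1] at hcc
      rw [hQAdef, hC0def]
      exact hcc
    have hQBy : ∀ y : ℕ, ℙ {ω | B ω = y} ≤ ENNReal.ofReal QB := by
      intro y
      rw [ENNReal.le_ofReal_iff_toReal_le (measure_ne_top _ _) hQBnn]
      have hcc := concentration X hXmeas hindep hident a b hab hpa hpb (Finset.Ico h n)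
        (by rw [hcard2]; omega) y
      rw [hcard2] at hcc
      rw [hQBdef, hC0def]
      exact hcc
    set G1 : Set ℕ := {j : ℕ | |(m:ℝ)|/2 ≤ |(j:ℝ) - (h:ℝ)|} with hG1def
    set G2 : Set ℕ := {j : ℕ | |(m:ℝ)|/2 ≤ |(j:ℝ) - ((n - h : ℕ):ℝ)|} with hG2def
    set Ch1 : ℝ := (h:ℝ) * σ2 / (|(m:ℝ)|/2)^2 with hCh1def
    set Ch2 : ℝ := ((n - h : ℕ):ℝ) * σ2 / (|(m:ℝ)|/2)^2 with hCh2def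
    have hCh1nn : 0 ≤ Ch1 := by positivity
    have hCh2nn : 0 ≤ Ch2 := by positivity
    have hchebA : ℙ {ω | A ω ∈ G1} ≤ ENNReal.ofReal Ch1 := by
      have h1 := cheb X hXmeas hindep hident hmean hsq (Finset.range h) (|(m:ℝ)|/2)
        (by positivity)
      rw [hcard1] at h1
      have hseteq : {ω | |(m:ℝ)|/2 ≤ |(∑ i ∈ Finset.range h, (X i ω:ℝ)) - (h:ℝ)|}
          = {ω | A ω ∈ G1} := by
        ext ω
        simp only [Set.mem_setOf_eq, hAdef, hG1def]
        rw [Nat.cast_sum]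
      rw [← hseteq, hCh1def]
      exact h1
    have hchebB : ℙ {ω | B ω ∈ G2} ≤ ENNReal.ofReal Ch2 := by
      have h1 := cheb X hXmeas hindep hident hmean hsq (Finset.Ico h n) (|(m:ℝ)|/2)
        (by positivity)
      rw [hcard2] at h1
      have hseteq : {ω | |(m:ℝ)|/2 ≤ |(∑ i ∈ Finset.Ico h n, (X i ω:ℝ)) - ((n - h : ℕ):ℝ)|}
          = {ω | B ω ∈ G2} := by
        ext ω
        simp only [Set.mem_setOf_eq, hBdef, hG2def]
        rw [Nat.cast_sum]
      rw [← hseteq, hCh2def]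
      exact h1
    set z : ℤ := (n:ℤ) - m with hzdef
    have hEsub : {ω | (∑ i ∈ Finset.range n, (X i ω : ℤ)) = z} ⊆
        (({ω | A ω ∈ G1} ∩ {ω | (A ω:ℤ) + (B ω:ℤ) = z}) ∪
          ({ω | B ω ∈ G2} ∩ {ω | (B ω:ℤ) + (A ω:ℤ) = z})) := by
      intro ω hω
      simp only [Set.mem_setOf_eq] at hω
      have hABz : (A ω:ℤ) + (B ω:ℤ) = z := by
        have hc : (∑ i ∈ Finset.range n, (X i ω : ℤ))
            = ((∑ i ∈ Finset.range n, X i ω : ℕ) : ℤ) := by push_cast; rfl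
        rw [hc, hsplitN ω] at hω
        push_cast at hω
        linarith
      have hnh : ((n - h : ℕ):ℝ) = (n:ℝ) - (h:ℝ) := by
        rw [Nat.cast_sub hhn]
      have hreal : ((A ω:ℝ) - h) + ((B ω:ℝ) - ((n - h : ℕ):ℝ)) = -(m:ℝ) := by
        have h1 : ((A ω:ℤ):ℝ) + ((B ω:ℤ):ℝ) = ((z:ℤ):ℝ) := by exact_mod_cast congrArg (fun t : ℤ => (t:ℝ)) hABz
        rw [hzdef] at h1
        push_cast at h1
        rw [hnh]
        linarith
      by_cases hA1 : |(m:ℝ)|/2 ≤ |(A ω:ℝ) - (h:ℝ)|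
      · left; exact ⟨hA1, hABz⟩
      · right
        constructor
        · show |(m:ℝ)|/2 ≤ |(B ω:ℝ) - ((n - h : ℕ):ℝ)|
          push_neg at hA1
          have h3 : (B ω:ℝ) - ((n - h : ℕ):ℝ) = -(m:ℝ) - ((A ω:ℝ) - h) := by linarith
          rw [h3]
          calc |(m:ℝ)|/2 = |(m:ℝ)| - |(m:ℝ)|/2 := by ring
            _ ≤ |(-(m:ℝ))| - |(A ω:ℝ) - (h:ℝ)| := by rw [abs_neg]; linarith
            _ ≤ |(-(m:ℝ)) - ((A ω:ℝ) - (h:ℝ))| := abs_sub_abs_le_abs_sub _ _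
        · show (B ω:ℤ) + (A ω:ℤ) = z
          rw [add_comm]
          exact hABz
    have hs1 := split_bound hAm hBm hABind G1 z QB hQBnn hQBy
    have hs2 := split_bound hBm hAm hABind.symm G2 z QA hQAnn hQAy
    have hmain : ℙ {ω | (∑ i ∈ Finset.range n, (X i ω:ℤ)) = z}
        ≤ ENNReal.ofReal (QB * Ch1 + QA * Ch2) := by
      calc ℙ {ω | (∑ i ∈ Finset.range n, (X i ω:ℤ)) = z}
          ≤ ℙ (({ω | A ω ∈ G1} ∩ {ω | (A ω:ℤ) + (B ω:ℤ) = z}) ∪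
              ({ω | B ω ∈ G2} ∩ {ω | (B ω:ℤ) + (A ω:ℤ) = z})) := measure_mono hEsub
        _ ≤ ℙ ({ω | A ω ∈ G1} ∩ {ω | (A ω:ℤ) + (B ω:ℤ) = z})
            + ℙ ({ω | B ω ∈ G2} ∩ {ω | (B ω:ℤ) + (A ω:ℤ) = z}) := measure_union_le _ _
        _ ≤ ENNReal.ofReal QB * ℙ {ω | A ω ∈ G1} + ENNReal.ofReal QA * ℙ {ω | B ω ∈ G2} :=
            add_le_add hs1 hs2
        _ ≤ ENNReal.ofReal QB * ENNReal.ofReal Ch1 + ENNReal.ofReal QA * ENNReal.ofReal Ch2 :=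
            add_le_add (mul_le_mul' le_rfl hchebA) (mul_le_mul' le_rfl hchebB)
        _ = ENNReal.ofReal (QB * Ch1 + QA * Ch2) := by
            rw [← ENNReal.ofReal_mul hQBnn, ← ENNReal.ofReal_mul hQAnn,
              ← ENNReal.ofReal_add (by positivity) (by positivity)]
    have htoReal := ENNReal.toReal_le_of_le_ofReal (by positivity) hmain
    -- arithmetic finish
    have hkey : ∀ x : ℝ, 0 < x → (n:ℝ) ≤ 3 * x →
        (n:ℝ) / Real.sqrt x ≤ Real.sqrt 3 * Real.sqrt n := by
      intro x hx h3x
      have hnnn : (0:ℝ) ≤ n := Nat.cast_nonneg n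
      rw [div_le_iff₀ (Real.sqrt_pos.2 hx)]
      calc (n:ℝ) = Real.sqrt ((n:ℝ)^2) := (Real.sqrt_sq hnnn).symm
        _ ≤ Real.sqrt (3 * (n:ℝ) * x) := Real.sqrt_le_sqrt (by nlinarith)
        _ = Real.sqrt 3 * Real.sqrt n * Real.sqrt x := by
            rw [Real.sqrt_mul (by positivity), Real.sqrt_mul (by norm_num)]
    have hhpos : (0:ℝ) < (h:ℝ) := by exact_mod_cast hh1
    have hnhpos : (0:ℝ) < ((n - h : ℕ):ℝ) := by exact_mod_cast hnh1
    have hb1 : (h:ℝ) / Real.sqrt ((n - h : ℕ):ℝ) ≤ Real.sqrt 3 * Real.sqrt n := by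
      calc (h:ℝ) / Real.sqrt ((n - h : ℕ):ℝ) ≤ (n:ℝ) / Real.sqrt ((n - h : ℕ):ℝ) := by
            gcongr
        _ ≤ Real.sqrt 3 * Real.sqrt n := hkey _ hnhpos (by exact_mod_cast h3nh)
    have hb2 : ((n - h : ℕ):ℝ) / Real.sqrt ((h : ℕ):ℝ) ≤ Real.sqrt 3 * Real.sqrt n := by
      calc ((n - h : ℕ):ℝ) / Real.sqrt ((h : ℕ):ℝ) ≤ (n:ℝ) / Real.sqrt ((h:ℕ):ℝ) := by
            gcongr
            exact Nat.sub_le n h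
        _ ≤ Real.sqrt 3 * Real.sqrt n := hkey _ hhpos (by exact_mod_cast h3h)
    have hsq1 : Real.sqrt ((n - h : ℕ):ℝ) ≠ 0 := by positivity
    have hsq2 : Real.sqrt ((h:ℕ):ℝ) ≠ 0 := by positivity
    have he1 : QB * Ch1 = C0 * σ2 * ((h:ℝ) / Real.sqrt ((n - h : ℕ):ℝ)) * (4 / (m:ℝ)^2) := by
      rw [hQBdef, hCh1def, div_pow, _root_.sq_abs]
      field_simp
      ring
    have he2 : QA * Ch2 = C0 * σ2 * (((n - h : ℕ):ℝ) / Real.sqrt ((h:ℕ):ℝ)) * (4 / (m:ℝ)^2) := by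
      rw [hQAdef, hCh2def, div_pow, _root_.sq_abs]
      field_simp
      ring
    have hC0σ : 0 ≤ C0 * σ2 := mul_nonneg hC0nn hσ2nn
    have h4m : 0 ≤ 4 / (m:ℝ)^2 := by positivity
    have hfin : QB * Ch1 + QA * Ch2 ≤ C * Real.sqrt n / (m:ℝ)^2 := by
      have ht1 : QB * Ch1 ≤ C0 * σ2 * (Real.sqrt 3 * Real.sqrt n) * (4 / (m:ℝ)^2) := by
        rw [he1]
        apply mul_le_mul_of_nonneg_right _ h4m
        exact mul_le_mul_of_nonneg_left hb1 hC0σ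
      have ht2 : QA * Ch2 ≤ C0 * σ2 * (Real.sqrt 3 * Real.sqrt n) * (4 / (m:ℝ)^2) := by
        rw [he2]
        apply mul_le_mul_of_nonneg_right _ h4m
        exact mul_le_mul_of_nonneg_left hb2 hC0σ
      have hCge : 8 * Real.sqrt 3 * C0 * σ2 ≤ C := by
        rw [hCdef]
        linarith
      have hsnn : 0 ≤ Real.sqrt (n:ℝ) := Real.sqrt_nonneg _
      calc QB * Ch1 + QA * Ch2
          ≤ 2 * (C0 * σ2 * (Real.sqrt 3 * Real.sqrt n) * (4 / (m:ℝ)^2)) := by linarith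
        _ = (8 * Real.sqrt 3 * C0 * σ2) * Real.sqrt n / (m:ℝ)^2 := by ring
        _ ≤ C * Real.sqrt n / (m:ℝ)^2 := by
            apply div_le_div_of_nonneg_right _ hmsq.le
            exact mul_le_mul_of_nonneg_right hCge hsnn
    exact htoReal.trans hfin
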